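/- arXiv:1507.06181 — 6 statements merged into one kernel-verified Lean document; each statement's English description precedes it below -/
import Mathlib

section
/- Let q, r > 0 and let D = {z ∈ ℂ³ : |z₁|² + |z₂|^q < 1 and |z₁|² + |z₃|^r < 1}. For nonnegative integers α₁, α₂, α₃, the squared L² norm of the monomial z₁^{α₁} z₂^{α₂} z₃^{α₃} over D equals π³ Γ(α₁+1) Γ((2α₂+2)/q + (2α₃+2)/r + 1) / ((α₂+1)(α₃+1) Γ((2α₂+2)/q + (2α₃+2)/r + α₁ + 2)). -/
open Real MeasureTheory Complex Set

lemma ind_integrable {X : Type*} [NormedAddCommGroup X] [MeasureSpace X] [BorelSpace X]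
    [ProperSpace X] [IsFiniteMeasureOnCompacts (volume : Measure X)]
    {S : Set X} (hS : MeasurableSet S) {R : ℝ} (hSR : S ⊆ Metric.closedBall 0 R)
    {f : X → ℝ} (hf : Continuous f) : Integrable (S.indicator f) :=
  ((hf.continuousOn.integrableOn_compact (isCompact_closedBall 0 R)).mono_set hSR).integrable_indicator hS

lemma rpow_lt_one_imp {a p : ℝ} (ha : 0 ≤ a) (hp : 0 < p) (h : a ^ p < 1) : a ≤ 1 := by
  by_contra hc
  push_neg at hc
  exact absurd h (not_lt.2 (Real.one_le_rpow hc.le hp.le))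

lemma cont_rpow_const (p : ℝ) (hp : 0 ≤ p) : Continuous fun x : ℝ => x ^ p :=
  continuous_iff_continuousAt.2 fun x => Real.continuousAt_rpow_const _ _ (Or.inr hp)

lemma radial_int (f : ℝ → ℝ) :
    (∫ z : ℂ, f (‖z‖)) = (2 * π) * ∫ s in Ioi (0:ℝ), s * f s := by
  have h := MeasureTheory.integral_fun_norm_addHaar (volume : Measure ℂ) f
  simp only [Complex.finrank_real_complex, measureReal_def, Complex.volume_ball,
    pow_one, smul_eq_mul, nsmul_eq_mul] at h
  norm_num [NNReal.coe_real_pi] at h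
  rw [h]; ring

lemma slice_int (p : ℝ) (hp : 0 < p) (n : ℕ) (t : ℝ) :
    (∫ s in Ioi (0:ℝ), s * (if s ^ p < t then (s:ℝ) ^ n else 0)) =
    if 0 < t then t ^ (((n:ℝ) + 2) / p) / ((n:ℝ) + 2) else 0 := by
  by_cases ht : 0 < t
  · rw [if_pos ht]
    set c := t ^ p⁻¹ with hc
    have hc0 : 0 < c := Real.rpow_pos_of_pos ht _
    have h1 : (∫ s in Ioi (0:ℝ), s * (if s ^ p < t then (s:ℝ) ^ n else 0))
        = ∫ s in Ioi (0:ℝ), (Ioo (0:ℝ) c).indicator (fun s => s ^ (n + 1)) s := by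
      apply setIntegral_congr_fun measurableSet_Ioi
      intro s hs
      have hs0 : (0:ℝ) < s := hs
      have hiff : s ^ p < t ↔ s < c := by
        rw [hc, ← Real.lt_rpow_inv_iff_of_pos hs0.le ht.le hp]
      simp only [indicator_apply, mem_Ioo, hiff]
      by_cases h : s < c
      · simp [h, hs0, pow_succ, mul_comm]
      · simp [h]
    rw [h1, setIntegral_indicator measurableSet_Ioo,
      inter_eq_self_of_subset_right Ioo_subset_Ioi_self,
      ← integral_Ioc_eq_integral_Ioo, ← intervalIntegral.integral_of_le hc0.le,
      integral_pow]
    have : c ^ (n + 1 + 1) = t ^ (((n:ℝ) + 2) / p) := by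
      rw [hc, ← Real.rpow_natCast (t ^ p⁻¹) (n+1+1), ← Real.rpow_mul ht.le]
      congr 1
      push_cast
      ring
    rw [this]
    push_cast
    ring
  · rw [if_neg ht]
    refine (setIntegral_congr_fun measurableSet_Ioi ?_).trans
      (integral_zero (ℝ) ℝ (μ := volume.restrict (Ioi 0)))
    intro s hs
    have : ¬ s ^ p < t := by
      push_neg at ht
      exact not_lt.2 (ht.trans (Real.rpow_pos_of_pos hs p).le)
    simp [this]

lemma beta_int (n : ℕ) (E : ℝ) (hE : 0 < E) :
    (∫ t in (0:ℝ)..1, t ^ n * (1 - t) ^ E) =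
    Real.Gamma ((n:ℝ) + 1) * Real.Gamma (E + 1) / Real.Gamma ((n:ℝ) + E + 2) := by
  have key := Complex.Gamma_mul_Gamma_eq_betaIntegral
    (s := (((n:ℝ) + 1 : ℝ) : ℂ)) (t := ((E + 1 : ℝ) : ℂ))
    (by rw [Complex.ofReal_re]; positivity) (by rw [Complex.ofReal_re]; positivity)
  have hbeta : Complex.betaIntegral (((n:ℝ) + 1 : ℝ) : ℂ) ((E + 1 : ℝ) : ℂ)
      = ((∫ t in (0:ℝ)..1, t ^ n * (1 - t) ^ E : ℝ) : ℂ) := by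
    rw [Complex.betaIntegral, ← intervalIntegral.integral_ofReal]
    apply intervalIntegral.integral_congr
    intro x hx
    rw [uIcc_of_le zero_le_one] at hx
    obtain ⟨h0, h1⟩ := hx
    have e1 : (((n:ℝ) + 1 : ℝ) : ℂ) - 1 = (n : ℂ) := by push_cast; ring
    have e2 : ((E + 1 : ℝ) : ℂ) - 1 = (E : ℂ) := by push_cast; ring
    show (↑x:ℂ) ^ ((((n:ℝ) + 1:ℝ):ℂ)-1) * ((1:ℂ) - ↑x) ^ (((E + 1:ℝ):ℂ)-1) = ((x ^ n * (1 - x) ^ E : ℝ) : ℂ)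
    rw [e1, e2, Complex.cpow_natCast]
    have e3 : ((1:ℂ) - (x:ℂ)) = ((1 - x : ℝ) : ℂ) := by push_cast; ring
    rw [e3, ← Complex.ofReal_cpow (by linarith) E]
    push_cast
    ring
  rw [hbeta] at key
  have hsum : (((n:ℝ) + 1 : ℝ) : ℂ) + ((E + 1 : ℝ) : ℂ) = (((n:ℝ) + E + 2 : ℝ) : ℂ) := by
    push_cast; ring
  rw [hsum, Complex.Gamma_ofReal, Complex.Gamma_ofReal, Complex.Gamma_ofReal,
    ← Complex.ofReal_mul, ← Complex.ofReal_mul] at key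
  have := Complex.ofReal_inj.mp key
  have hne : Real.Gamma ((n:ℝ) + E + 2) ≠ 0 :=
    (Real.Gamma_pos_of_pos (by positivity)).ne'
  field_simp
  linarith [this]

lemma cont_rpow (E : ℝ) (hE : 0 < E) : Continuous fun t : ℝ => (1 - t) ^ E := by
  rw [continuous_iff_continuousAt]
  intro x
  exact (Real.continuousAt_rpow_const _ _ (Or.inr hE.le)).comp
    ((continuous_const.sub continuous_id).continuousAt)

lemma sub_int (n : ℕ) (E : ℝ) (hE : 0 < E) :
    (∫ s in Ioi (0:ℝ), s * (if s ^ (2:ℝ) < 1 then (s:ℝ) ^ (2*n) * (1 - s ^ (2:ℝ)) ^ E else 0)) =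
    (1/2) * ∫ t in (0:ℝ)..1, t ^ n * (1 - t) ^ E := by
  have h2 : ∀ s : ℝ, s ^ (2:ℝ) = s ^ (2:ℕ) := fun s => by
    rw [← Real.rpow_natCast s 2]; norm_num
  have h1 : (∫ s in Ioi (0:ℝ), s * (if s ^ (2:ℝ) < 1 then (s:ℝ) ^ (2*n) * (1 - s ^ (2:ℝ)) ^ E else 0))
      = ∫ s in Ioi (0:ℝ),
        (Ioo (0:ℝ) 1).indicator (fun s => s ^ (2*n+1) * (1 - s ^ (2:ℕ)) ^ E) s := by
    apply setIntegral_congr_fun measurableSet_Ioi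
    intro s hs
    have hs0 : (0:ℝ) < s := hs
    have hiff : s ^ (2:ℝ) < 1 ↔ s < 1 := by
      rw [h2]; exact pow_lt_one_iff_of_nonneg hs0.le two_ne_zero
    beta_reduce
    by_cases h : s < 1
    · rw [if_pos (hiff.mpr h), indicator_of_mem (by exact ⟨hs0, h⟩)]
      rw [h2]
      ring
    · rw [if_neg (fun hh => h (hiff.mp hh)), indicator_of_notMem (by simp [h])]
      ring
  rw [h1, setIntegral_indicator measurableSet_Ioo,
    inter_eq_self_of_subset_right Ioo_subset_Ioi_self,
    ← integral_Ioc_eq_integral_Ioo, ← intervalIntegral.integral_of_le zero_le_one]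
  have hderiv : ∀ x ∈ uIcc (0:ℝ) 1, HasDerivAt (fun s : ℝ => s ^ (2:ℕ)) (2 * x) x := by
    intro x _
    simpa using hasDerivAt_pow 2 x
  have hsub := intervalIntegral.integral_comp_mul_deriv (a := 0) (b := 1)
    (g := fun t => t ^ n * (1 - t) ^ E) hderiv
    (by fun_prop) ((continuous_pow n).mul (cont_rpow E hE))
  norm_num at hsub
  rw [← hsub, ← intervalIntegral.integral_const_mul]
  apply intervalIntegral.integral_congr
  intro x _
  simp only [Function.comp]
  rw [← pow_mul]
  ring
lemma complex_slice (p : ℝ) (hp : 0 < p) (n : ℕ) (K a : ℝ) (P : Prop) [Decidable P] :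
    (∫ z : ℂ, if P ∧ a + ‖z‖ ^ p < 1 then K * ‖z‖ ^ (2*n) else 0) =
    if P ∧ 0 < 1 - a then 2 * π * K * (1 - a) ^ ((2*(n:ℝ) + 2)/p) / (2*(n:ℝ) + 2) else 0 := by
  have h1 : (fun z : ℂ => if P ∧ a + ‖z‖ ^ p < 1 then K * ‖z‖ ^ (2*n) else 0)
      = fun z : ℂ => (fun s : ℝ => if P ∧ a + s ^ p < 1 then K * s ^ (2*n) else 0)
        (‖z‖) := rfl
  rw [h1, radial_int (fun s : ℝ => if P ∧ a + s ^ p < 1 then K * s ^ (2*n) else 0)]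
  have h2 : ∀ s : ℝ, s * (if P ∧ a + s ^ p < 1 then K * s ^ (2*n) else 0)
      = (if P then K else 0) * (s * (if s ^ p < 1 - a then (s:ℝ) ^ (2*n) else 0)) := by
    intro s
    by_cases hPP : P
    · simp only [hPP, true_and, if_true]
      by_cases hlt : s ^ p < 1 - a
      · rw [if_pos (by linarith), if_pos hlt]; ring
      · rw [if_neg (fun hh => hlt (by linarith)), if_neg hlt]; ring
    · simp [hPP]
  simp_rw [h2]
  rw [integral_const_mul, slice_int p hp (2*n) (1-a)]
  by_cases hPP : P
  · rw [if_pos hPP]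
    by_cases hA : 0 < 1 - a
    · rw [if_pos hA, if_pos (show P ∧ 0 < 1 - a from ⟨hPP, hA⟩)]; push_cast; ring
    · rw [if_neg hA, if_neg (show ¬(P ∧ 0 < 1 - a) from fun hc => hA hc.2)]; ring
  · simp [hPP]

theorem monomial_norm_sq_D2 (q r : ℝ) (hq : 0 < q) (hr : 0 < r) (α₁ α₂ α₃ : ℕ) :
    (∫ z in {z : ℂ × ℂ × ℂ |
        ‖z.1‖ ^ (2:ℝ) + ‖z.2.1‖ ^ q < 1 ∧
        ‖z.1‖ ^ (2:ℝ) + ‖z.2.2‖ ^ r < 1},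
      ‖z.1 ^ α₁ * z.2.1 ^ α₂ * z.2.2 ^ α₃‖ ^ 2) =
    π ^ 3 * Real.Gamma (α₁ + 1) *
      Real.Gamma ((2 * α₂ + 2) / q + (2 * α₃ + 2) / r + 1) /
      ((α₂ + 1) * (α₃ + 1) *
        Real.Gamma ((2 * α₂ + 2) / q + (2 * α₃ + 2) / r + α₁ + 2)) := by
  have h20 : (0:ℝ) ≤ 2 := by norm_num
  have habs : ∀ w : ℂ, (0:ℝ) ≤ ‖w‖ := fun w => norm_nonneg w
  set f : ℂ × ℂ × ℂ → ℝ := fun z => ‖z.1 ^ α₁ * z.2.1 ^ α₂ * z.2.2 ^ α₃‖ ^ 2 with hf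
  have hfeq : ∀ z : ℂ × ℂ × ℂ, f z
      = ‖z.1‖ ^ (2*α₁) * ‖z.2.1‖ ^ (2*α₂) * ‖z.2.2‖ ^ (2*α₃) := by
    intro z
    simp only [hf, norm_mul, norm_pow, mul_pow, ← pow_mul']
  set S : Set (ℂ × ℂ × ℂ) := {z : ℂ × ℂ × ℂ |
      ‖z.1‖ ^ (2:ℝ) + ‖z.2.1‖ ^ q < 1 ∧
      ‖z.1‖ ^ (2:ℝ) + ‖z.2.2‖ ^ r < 1} with hS
  have hcont : Continuous f :=
    (((continuous_fst.pow α₁).mul ((continuous_fst.comp continuous_snd).pow α₂)).mul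
      ((continuous_snd.comp continuous_snd).pow α₃)).norm.pow 2
  have hSopen : IsOpen S := by
    apply IsOpen.inter
    · exact isOpen_lt (((cont_rpow_const 2 h20).comp
        (continuous_norm.comp continuous_fst)).add ((cont_rpow_const q hq.le).comp
        (continuous_norm.comp (continuous_fst.comp continuous_snd)))) continuous_const
    · exact isOpen_lt (((cont_rpow_const 2 h20).comp
        (continuous_norm.comp continuous_fst)).add ((cont_rpow_const r hr.le).comp
        (continuous_norm.comp (continuous_snd.comp continuous_snd)))) continuous_const
  have hSm := hSopen.measurableSet
  have hSsub : S ⊆ Metric.closedBall 0 1 := by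
    rintro ⟨z₁, z₂, z₃⟩ ⟨h1, h2⟩
    have b1 : (0:ℝ) ≤ ‖z₁‖ ^ (2:ℝ) := Real.rpow_nonneg (habs _) 2
    have b2 : (0:ℝ) ≤ ‖z₂‖ ^ q := Real.rpow_nonneg (habs _) q
    have b3 : (0:ℝ) ≤ ‖z₃‖ ^ r := Real.rpow_nonneg (habs _) r
    simp only [Metric.mem_closedBall, dist_zero_right, Prod.norm_def,
      max_le_iff]
    exact ⟨rpow_lt_one_imp (habs _) two_pos (by linarith),
      rpow_lt_one_imp (habs _) hq (by linarith),
      rpow_lt_one_imp (habs _) hr (by linarith)⟩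
  have hInt : Integrable (S.indicator f) := ind_integrable hSm hSsub hcont
  have hInt2 : Integrable (S.indicator f) ((volume : Measure ℂ).prod volume) := by
    rwa [← Measure.volume_eq_prod]
  have inner2 : ∀ z₁ : ℂ, (∫ w : ℂ × ℂ, S.indicator f (z₁, w))
      = (4 * π^2 / ((2*(α₂:ℝ)+2) * (2*(α₃:ℝ)+2))) *
        (if ‖z₁‖ ^ (2:ℝ) < 1 then ‖z₁‖ ^ (2*α₁) *
          (1 - ‖z₁‖ ^ (2:ℝ)) ^ ((2*(α₂:ℝ)+2)/q + (2*(α₃:ℝ)+2)/r) else 0) := by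
    intro z₁
    set a : ℝ := ‖z₁‖ ^ (2:ℝ) with ha
    have ha0 : (0:ℝ) ≤ a := Real.rpow_nonneg (habs _) 2
    set g : ℂ × ℂ → ℝ := fun w =>
      ‖z₁‖ ^ (2*α₁) * ‖w.1‖ ^ (2*α₂) * ‖w.2‖ ^ (2*α₃) with hg
    set T : Set (ℂ × ℂ) := {w : ℂ × ℂ |
      a + ‖w.1‖ ^ q < 1 ∧ a + ‖w.2‖ ^ r < 1} with hT
    have hTopen : IsOpen T := by
      apply IsOpen.inter
      · exact isOpen_lt (continuous_const.add ((cont_rpow_const q hq.le).comp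
          (continuous_norm.comp continuous_fst))) continuous_const
      · exact isOpen_lt (continuous_const.add ((cont_rpow_const r hr.le).comp
          (continuous_norm.comp continuous_snd))) continuous_const
    have hTsub : T ⊆ Metric.closedBall 0 1 := by
      rintro ⟨z₂, z₃⟩ ⟨h1, h2⟩
      have b2 : (0:ℝ) ≤ ‖z₂‖ ^ q := Real.rpow_nonneg (habs _) q
      have b3 : (0:ℝ) ≤ ‖z₃‖ ^ r := Real.rpow_nonneg (habs _) r
      simp only [Metric.mem_closedBall, dist_zero_right, Prod.norm_def,
        max_le_iff]
      exact ⟨rpow_lt_one_imp (habs _) hq (by linarith),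
        rpow_lt_one_imp (habs _) hr (by linarith)⟩
    have hgcont : Continuous g :=
      (continuous_const.mul ((continuous_norm.comp continuous_fst).pow (2*α₂))).mul
        ((continuous_norm.comp continuous_snd).pow (2*α₃))
    have hsec : (fun w : ℂ × ℂ => S.indicator f (z₁, w)) = T.indicator g := by
      funext w
      simp only [indicator_apply, hS, hT, hg, mem_setOf_eq, hfeq]
      rfl
    rw [hsec]
    have hIntT : Integrable (T.indicator g) := ind_integrable hTopen.measurableSet hTsub hgcont
    have hIntT2 : Integrable (T.indicator g) ((volume : Measure ℂ).prod volume) := by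
      rwa [← Measure.volume_eq_prod]
    rw [Measure.volume_eq_prod, integral_prod _ hIntT2]
    have hin : ∀ z₂ : ℂ, (∫ z₃ : ℂ, T.indicator g (z₂, z₃))
        = if (a + ‖z₂‖ ^ q < 1) ∧ 0 < 1 - a then
            2 * π * (‖z₁‖ ^ (2*α₁) * ‖z₂‖ ^ (2*α₂)) *
              (1 - a) ^ ((2*(α₃:ℝ) + 2)/r) / (2*(α₃:ℝ) + 2) else 0 := by
      intro z₂
      have h1 : (fun z₃ : ℂ => T.indicator g (z₂, z₃))
          = fun z₃ : ℂ => (fun s : ℝ => if (a + ‖z₂‖ ^ q < 1) ∧ a + s ^ r < 1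
              then (‖z₁‖ ^ (2*α₁) * ‖z₂‖ ^ (2*α₂)) * s ^ (2*α₃) else 0)
              (‖z₃‖) := by
        funext z₃
        simp only [indicator_apply, hT, hg, mem_setOf_eq]
      rw [h1, complex_slice r hr α₃ _ a _]
    have h2 : (fun z₂ : ℂ => ∫ z₃ : ℂ, T.indicator g (z₂, z₃))
        = fun z₂ : ℂ => (fun s : ℝ => if (0 < 1 - a) ∧ a + s ^ q < 1 then
            (2 * π * ‖z₁‖ ^ (2*α₁) * (1 - a) ^ ((2*(α₃:ℝ) + 2)/r) / (2*(α₃:ℝ) + 2)) *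
              s ^ (2*α₂) else 0) (‖z₂‖) := by
      funext z₂
      rw [hin z₂]
      beta_reduce
      by_cases hc : a + ‖z₂‖ ^ q < 1
      · by_cases hd : 0 < 1 - a
        · rw [if_pos ⟨hc, hd⟩, if_pos ⟨hd, hc⟩]; ring
        · rw [if_neg (fun hh => hd hh.2), if_neg (fun hh => hd hh.1)]
      · rw [if_neg (fun hh => hc hh.1), if_neg (fun hh => hc hh.2)]
    rw [h2, complex_slice q hq α₂ _ a _]
    by_cases hA1 : a < 1
    · have hd : (0:ℝ) < 1 - a := by linarith
      rw [if_pos ⟨hd, hd⟩, if_pos hA1,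
        Real.rpow_add (by linarith : (0:ℝ) < 1 - a) ((2*(α₂:ℝ)+2)/q) ((2*(α₃:ℝ)+2)/r)]
      have n2 : (2*(α₂:ℝ)+2) ≠ 0 := by positivity
      have n3 : (2*(α₃:ℝ)+2) ≠ 0 := by positivity
      field_simp
      ring
    · rw [if_neg (show ¬ ((0:ℝ) < 1 - a ∧ (0:ℝ) < 1 - a) from fun hh => hA1 (by linarith [hh.1])),
        if_neg hA1, mul_zero]
  rw [← integral_indicator hSm, Measure.volume_eq_prod, integral_prod _ hInt2]
  have hstep : (fun z₁ : ℂ => ∫ w : ℂ × ℂ, S.indicator f (z₁, w))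
      = fun z₁ : ℂ => (4 * π^2 / ((2*(α₂:ℝ)+2) * (2*(α₃:ℝ)+2))) *
        ((fun s : ℝ => if s ^ (2:ℝ) < 1 then s ^ (2*α₁) *
          (1 - s ^ (2:ℝ)) ^ ((2*(α₂:ℝ)+2)/q + (2*(α₃:ℝ)+2)/r) else 0) (‖z₁‖)) :=
    funext inner2
  have hEpos : (0:ℝ) < (2*(α₂:ℝ)+2)/q + (2*(α₃:ℝ)+2)/r := by
    have := div_pos (by positivity : (0:ℝ) < 2*(α₂:ℝ)+2) hq
    have := div_pos (by positivity : (0:ℝ) < 2*(α₃:ℝ)+2) hr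
    linarith
  rw [hstep, integral_const_mul, radial_int (fun s : ℝ => if s ^ (2:ℝ) < 1 then s ^ (2*α₁) *
    (1 - s ^ (2:ℝ)) ^ ((2*(α₂:ℝ)+2)/q + (2*(α₃:ℝ)+2)/r) else 0)]
  beta_reduce
  rw [sub_int α₁ _ hEpos, beta_int α₁ _ hEpos,
    show (α₁:ℝ) + ((2*(α₂:ℝ)+2)/q + (2*(α₃:ℝ)+2)/r) + 2
      = (2*(α₂:ℝ)+2)/q + (2*(α₃:ℝ)+2)/r + (α₁:ℝ) + 2 from by ring]
  have hG : Real.Gamma ((2*(α₂:ℝ)+2)/q + (2*(α₃:ℝ)+2)/r + (α₁:ℝ) + 2) ≠ 0 :=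
    (Real.Gamma_pos_of_pos (by positivity)).ne'
  have n2 : (2*(α₂:ℝ)+2) ≠ 0 := by positivity
  have n3 : (2*(α₃:ℝ)+2) ≠ 0 := by positivity
  have n4 : ((α₂:ℝ)+1) ≠ 0 := by positivity
  have n5 : ((α₃:ℝ)+1) ≠ 0 := by positivity
  field_simp
  ring
end

section
/- For all positive reals q, r and all complex numbers x, y with |x| < 1 and |y| < 1, q r (1-x)(1-y) + 2q(1-x)(1+y) + 2r(1+x)(1-y) ≠ 0. -/
lemma cayley_re_pos (z : ℂ) (hz : ‖z‖ < 1) : 0 < ((1 + z) / (1 - z)).re := by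
  have hns : Complex.normSq z < 1 := by
    have : Complex.normSq z = ‖z‖ ^ 2 := by
      rw [Complex.normSq_eq_norm_sq]
    nlinarith [norm_nonneg z]
  have hne : (1 : ℂ) - z ≠ 0 := by
    intro h
    have : z = 1 := by linear_combination -h
    rw [this] at hz; simp at hz
  have hpos : 0 < Complex.normSq (1 - z) := by
    simpa [Complex.normSq_pos] using hne
  rw [Complex.div_re]
  have h1 : ((1 : ℂ) + z).re = 1 + z.re := by simp
  have h2 : ((1 : ℂ) + z).im = z.im := by simp
  have h3 : ((1 : ℂ) - z).re = 1 - z.re := by simp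
  have h4 : ((1 : ℂ) - z).im = -z.im := by simp
  rw [h1, h2, h3, h4]
  rw [← add_div, lt_div_iff₀ hpos]
  have : (1 + z.re) * (1 - z.re) + z.im * -z.im = 1 - Complex.normSq z := by
    simp [Complex.normSq_apply]; ring
  rw [this]
  linarith

theorem kernel_numerator_ne_zero (q r : ℝ) (hq : 0 < q) (hr : 0 < r) (x y : ℂ)
    (hx : ‖x‖ < 1) (hy : ‖y‖ < 1) :
    (q : ℂ) * r * (1 - x) * (1 - y) + 2 * q * (1 - x) * (1 + y) +
      2 * r * (1 + x) * (1 - y) ≠ 0 := by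
  have hnex : (1 : ℂ) - x ≠ 0 := by
    intro h
    have : x = 1 := by linear_combination -h
    rw [this] at hx; simp at hx
  have hney : (1 : ℂ) - y ≠ 0 := by
    intro h
    have : y = 1 := by linear_combination -h
    rw [this] at hy; simp at hy
  have hA := cayley_re_pos x hx
  have hB := cayley_re_pos y hy
  set A := (1 + x) / (1 - x) with hAdef
  set B := (1 + y) / (1 - y) with hBdef
  have key : (q : ℂ) * r * (1 - x) * (1 - y) + 2 * q * (1 - x) * (1 + y) +
      2 * r * (1 + x) * (1 - y)
      = (1 - x) * (1 - y) * ((q : ℂ) * r + 2 * q * B + 2 * r * A) := by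
    rw [hAdef, hBdef]
    field_simp
  rw [key]
  apply mul_ne_zero (mul_ne_zero hnex hney)
  intro h
  have hre : q * r + 2 * q * B.re + 2 * r * A.re = 0 := by
    have : ((q : ℂ) * r + 2 * q * B + 2 * r * A).re = q * r + 2 * q * B.re + 2 * r * A.re := by
      simp
    rw [← this, h]; rfl
  nlinarith [mul_pos hq hB, mul_pos hr hA, mul_pos hq hr]
end

section
/- Let q, r > 0, ε ∈ (0,1), and set A = qr + 2q + 2r, B = -εqr - 2εq + 2εr, C = -εqr + 2εq - 2εr, D = ε²qr - 2ε²q - 2ε²r. Then for every real x with -1 ≤ x ≤ 1, (A·B - C·D)·x > C² + D² - A² - B². -/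
theorem schur_cohn_inequality (q r ε : ℝ) (hq : 0 < q) (hr : 0 < r)
    (hε0 : 0 < ε) (hε1 : ε < 1) (x : ℝ) (hx1 : -1 ≤ x) (hx2 : x ≤ 1) :
    let A := q * r + 2 * q + 2 * r
    let B := -ε * q * r - 2 * ε * q + 2 * ε * r
    let C := -ε * q * r + 2 * ε * q - 2 * ε * r
    let D := ε ^ 2 * q * r - 2 * ε ^ 2 * q - 2 * ε ^ 2 * r
    (A * B - C * D) * x > C ^ 2 + D ^ 2 - A ^ 2 - B ^ 2 := by
  intro A B C D
  have he2 : (0:ℝ) ≤ 1 - ε ^ 2 := by nlinarith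
  have hb1 : (0:ℝ) < q * r * (1 - ε + ε ^ 2) + 2 * r * (1 - ε ^ 2) := by nlinarith [mul_pos hq hr]
  have hb2 : (0:ℝ) < q * r * (1 + ε + ε ^ 2) + 2 * r * (1 - ε ^ 2) := by nlinarith [mul_pos hq hr]
  have h8 : (0:ℝ) < 8 * ε ^ 2 * q := by positivity
  have key1 : C ^ 2 + D ^ 2 - A ^ 2 - B ^ 2 < (A * B - C * D) * 1 := by
    simp only [A, B, C, D]
    nlinarith [mul_pos h8 hb1,
      mul_nonneg he2 (sq_nonneg (2*(q*r+2*q+2*r) - ε*(q*r+2*q-2*r))),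
      mul_nonneg he2 (sq_nonneg (ε*(q*r+2*q-2*r)))]
  have key2 : C ^ 2 + D ^ 2 - A ^ 2 - B ^ 2 < (A * B - C * D) * (-1) := by
    simp only [A, B, C, D]
    nlinarith [mul_pos h8 hb2,
      mul_nonneg he2 (sq_nonneg (2*(q*r+2*q+2*r) + ε*(q*r+2*q-2*r))),
      mul_nonneg he2 (sq_nonneg (ε*(q*r+2*q-2*r)))]
  rcases le_or_gt 0 (A * B - C * D) with h | h
  · nlinarith [mul_le_mul_of_nonneg_left hx1 h]
  · nlinarith [mul_le_mul_of_nonpos_left hx2 h.le]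
end

section
/- Let D = {z ∈ ℂ³ : |z₁|² + |z₂|^q < 1, |z₁|² + |z₃|^r < 1} for q, r > 0 and let a ∈ ℂ with |a| < 1. The map φ(z) = ((z₁ - a)/(1 - ā z₁), (1-|a|²)^{1/q} z₂ /(1 - ā z₁)^{2/q}, (1-|a|²)^{1/r} z₃ /(1 - ā z₁)^{2/r}) maps D bijectively onto D. -/
open Complex

lemma aux_ne (a z : ℂ) (ha : ‖a‖ < 1) (hz : ‖z‖ < 1) :
    1 - (starRingEnd ℂ) a * z ≠ 0 := by
  intro h
  have : ‖(starRingEnd ℂ) a * z‖ < 1 := by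
    rw [norm_mul, Complex.norm_conj]
    calc ‖a‖ * ‖z‖ ≤ 1 * ‖z‖ := by
          exact mul_le_mul_of_nonneg_right ha.le (norm_nonneg z)
      _ = ‖z‖ := one_mul _
      _ < 1 := hz
  have h2 : (starRingEnd ℂ) a * z = 1 := by linear_combination -h
  rw [h2] at this; simp at this

lemma aux_re (a z : ℂ) (ha : ‖a‖ < 1) (hz : ‖z‖ < 1) :
    0 < (1 - (starRingEnd ℂ) a * z).re := by
  have : ‖(starRingEnd ℂ) a * z‖ < 1 := by
    rw [norm_mul, Complex.norm_conj]
    calc ‖a‖ * ‖z‖ ≤ 1 * ‖z‖ :=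
          mul_le_mul_of_nonneg_right ha.le (norm_nonneg z)
      _ = ‖z‖ := one_mul _
      _ < 1 := hz
  have hre := Complex.abs_re_le_norm ((starRingEnd ℂ) a * z)
  simp only [Complex.sub_re, Complex.one_re]
  have h4 : ((starRingEnd ℂ) a * z).re < 1 :=
    lt_of_le_of_lt (le_trans (le_abs_self _) hre) this
  linarith

lemma aux_normSq (a z : ℂ) :
    Complex.normSq (1 - (starRingEnd ℂ) a * z) =
      Complex.normSq (z - a) + (1 - Complex.normSq a) * (1 - Complex.normSq z) := by
  have h : ((Complex.normSq (1 - (starRingEnd ℂ) a * z) : ℝ) : ℂ) =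
      ((Complex.normSq (z - a) + (1 - Complex.normSq a) * (1 - Complex.normSq z) : ℝ) : ℂ) := by
    push_cast
    rw [← Complex.mul_conj, ← Complex.mul_conj, ← Complex.mul_conj, ← Complex.mul_conj]
    simp only [map_sub, map_mul, map_one, Complex.conj_conj]
    ring
  exact_mod_cast h

lemma aux_ofReal_mul_cpow {c : ℝ} (hc : 0 < c) {x : ℂ} (hx : x ≠ 0) (t : ℂ) :
    ((c : ℂ) * x) ^ t = (c : ℂ) ^ t * x ^ t := by
  have hc' : (c : ℂ) ≠ 0 := Complex.ofReal_ne_zero.mpr hc.ne'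
  rw [Complex.cpow_def_of_ne_zero (mul_ne_zero hc' hx), Complex.log_ofReal_mul hc hx,
    Complex.ofReal_log hc.le, add_mul, Complex.exp_add, ← Complex.cpow_def_of_ne_zero hc',
    ← Complex.cpow_def_of_ne_zero hx]

lemma aux_div_cpow {c : ℝ} (hc : 0 < c) {x : ℂ} (hre : 0 < x.re) (t : ℂ) :
    ((c : ℂ) / x) ^ t = (c : ℂ) ^ t / x ^ t := by
  have hx : x ≠ 0 := by intro h; rw [h] at hre; simp at hre
  have harg : x.arg ≠ Real.pi := by
    intro h
    rw [Complex.arg_eq_pi_iff] at h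
    linarith [h.1]
  rw [div_eq_mul_inv, aux_ofReal_mul_cpow hc (inv_ne_zero hx), Complex.inv_cpow _ _ harg,
    div_eq_mul_inv]

lemma aux_rpow_two (x : ℂ) : ‖x‖ ^ (2:ℝ) = Complex.normSq x := by
  rw [show (2:ℝ) = ((2:ℕ):ℝ) by norm_num, Real.rpow_natCast, Complex.sq_norm]

lemma aux_abs_coord (q : ℝ) (hq : 0 < q) (c : ℝ) (hc : 0 ≤ c) (z u : ℂ) :
    ‖((c ^ (1/q : ℝ) : ℝ) : ℂ) * z / u ^ ((2/q : ℝ) : ℂ)‖ ^ q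
      = c * ‖z‖ ^ q / Complex.normSq u := by
  rw [norm_div, norm_mul, Complex.norm_real, Complex.norm_cpow_real,
    Real.norm_of_nonneg (Real.rpow_nonneg hc _)]
  rw [Real.div_rpow (by positivity) (Real.rpow_nonneg (norm_nonneg u) _),
    Real.mul_rpow (Real.rpow_nonneg hc _) (norm_nonneg z),
    ← Real.rpow_mul hc, ← Real.rpow_mul (norm_nonneg u),
    one_div, inv_mul_cancel₀ hq.ne', Real.rpow_one, div_mul_cancel₀ _ hq.ne',
    aux_rpow_two]

lemma aux_mem_iff (q : ℝ) (hq : 0 < q) (a z₁ z₂ : ℂ) (ha : ‖a‖ < 1)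
    (hz : ‖z₁‖ < 1) :
    Complex.normSq ((z₁ - a) / (1 - (starRingEnd ℂ) a * z₁))
      + (1 - Complex.normSq a) * ‖z₂‖ ^ q / Complex.normSq (1 - (starRingEnd ℂ) a * z₁) < 1
    ↔ Complex.normSq z₁ + ‖z₂‖ ^ q < 1 := by
  have hu : (1 - (starRingEnd ℂ) a * z₁) ≠ 0 := aux_ne a z₁ ha hz
  have hu' : 0 < Complex.normSq (1 - (starRingEnd ℂ) a * z₁) := Complex.normSq_pos.mpr hu
  have hid := aux_normSq a z₁
  have hsa : Complex.normSq a < 1 := by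
    rw [← Complex.sq_norm]; nlinarith [norm_nonneg a, ha]
  have hsz : Complex.normSq z₁ < 1 := by
    rw [← Complex.sq_norm]; nlinarith [norm_nonneg z₁]
  have hX : 0 ≤ ‖z₂‖ ^ q := Real.rpow_nonneg (norm_nonneg z₂) _
  rw [map_div₀, ← add_div, div_lt_one hu']
  constructor
  · intro h; nlinarith
  · intro h; nlinarith

lemma aux_abs_sq (a : ℂ) : ((1 - ‖a‖^2 : ℝ) : ℂ) = 1 - (starRingEnd ℂ) a * a := by
  rw [mul_comm, Complex.mul_conj, Complex.normSq_eq_norm_sq]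
  push_cast
  ring

lemma aux_den (a z₁ : ℂ) (ha : ‖a‖ < 1) (hz : ‖z₁‖ < 1) :
    1 - (starRingEnd ℂ) (-a) * ((z₁ - a) / (1 - (starRingEnd ℂ) a * z₁))
      = ((1 - ‖a‖^2 : ℝ) : ℂ) / (1 - (starRingEnd ℂ) a * z₁) := by
  have hu := aux_ne a z₁ ha hz
  rw [aux_abs_sq]
  simp only [map_neg, div_eq_mul_inv]
  linear_combination -(mul_inv_cancel₀ hu)

lemma aux_c_pos (a : ℂ) (ha : ‖a‖ < 1) : (0:ℝ) < 1 - ‖a‖^2 := by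
  nlinarith [norm_nonneg a]

lemma aux_comp1 (a z₁ : ℂ) (ha : ‖a‖ < 1) (hz : ‖z₁‖ < 1) :
    ((z₁ - a) / (1 - (starRingEnd ℂ) a * z₁) - (-a)) /
      (1 - (starRingEnd ℂ) (-a) * ((z₁ - a) / (1 - (starRingEnd ℂ) a * z₁))) = z₁ := by
  have hu := aux_ne a z₁ ha hz
  have hc : ((1 - ‖a‖^2 : ℝ) : ℂ) ≠ 0 :=
    Complex.ofReal_ne_zero.mpr (aux_c_pos a ha).ne'
  rw [aux_den a z₁ ha hz, div_div_eq_mul_div, div_eq_iff hc, aux_abs_sq]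
  simp only [div_eq_mul_inv]
  linear_combination (z₁ - a) * mul_inv_cancel₀ hu

lemma aux_field (A U C w : ℂ) (hU : U ≠ 0) (hC : C ≠ 0) (h : A * A = C) :
    A * (A * w / U) / (C / U) = w := by
  field_simp
  linear_combination w * h

lemma aux_comp2 (q : ℝ) (hq : 0 < q) (a z₁ z₂ : ℂ) (ha : ‖a‖ < 1)
    (hz : ‖z₁‖ < 1) :
    (((1 - ‖a‖^2 : ℝ) ^ (1/q : ℝ) : ℝ) : ℂ) *
        ((((1 - ‖a‖^2 : ℝ) ^ (1/q : ℝ) : ℝ) : ℂ) * z₂ /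
          (1 - (starRingEnd ℂ) a * z₁) ^ ((2/q : ℝ) : ℂ)) /
      (1 - (starRingEnd ℂ) (-a) * ((z₁ - a) / (1 - (starRingEnd ℂ) a * z₁))) ^ ((2/q : ℝ) : ℂ)
      = z₂ := by
  have hu := aux_ne a z₁ ha hz
  have hre := aux_re a z₁ ha hz
  have hcpos := aux_c_pos a ha
  rw [aux_den a z₁ ha hz, aux_div_cpow hcpos hre]
  have hU : (1 - (starRingEnd ℂ) a * z₁) ^ ((2/q : ℝ) : ℂ) ≠ 0 := by
    simp [Complex.cpow_eq_zero_iff, hu]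
  have hC : ((1 - ‖a‖^2 : ℝ) : ℂ) ^ ((2/q : ℝ) : ℂ) ≠ 0 := by
    intro h
    rw [Complex.cpow_eq_zero_iff] at h
    exact (Complex.ofReal_ne_zero.mpr hcpos.ne') h.1
  have hkey : (((1 - ‖a‖^2 : ℝ) ^ (1/q : ℝ) : ℝ) : ℂ) *
      (((1 - ‖a‖^2 : ℝ) ^ (1/q : ℝ) : ℝ) : ℂ) = ((1 - ‖a‖^2 : ℝ) : ℂ) ^ ((2/q : ℝ) : ℂ) := by
    rw [← Complex.ofReal_cpow hcpos.le, ← Complex.ofReal_mul, ← Real.rpow_add hcpos]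
    norm_num
    ring_nf
  exact aux_field _ _ _ _ hU hC hkey
lemma aux_norm_normSq (a : ℂ) : (1 - ‖a‖^2 : ℝ) = 1 - Complex.normSq a := by
  rw [Complex.normSq_eq_norm_sq]

lemma aux_mapsTo (q r : ℝ) (hq : 0 < q) (hr : 0 < r) (a : ℂ) (ha : ‖a‖ < 1) :
    Set.MapsTo
      (fun z : ℂ × ℂ × ℂ =>
        ((z.1 - a) / (1 - (starRingEnd ℂ) a * z.1),
         (((1 - ‖a‖ ^ 2 : ℝ) ^ (1 / q : ℝ) : ℝ) : ℂ) * z.2.1 /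
           (1 - (starRingEnd ℂ) a * z.1) ^ ((2 / q : ℝ) : ℂ),
         (((1 - ‖a‖ ^ 2 : ℝ) ^ (1 / r : ℝ) : ℝ) : ℂ) * z.2.2 /
           (1 - (starRingEnd ℂ) a * z.1) ^ ((2 / r : ℝ) : ℂ)))
      {z : ℂ × ℂ × ℂ |
        ‖z.1‖ ^ (2:ℝ) + ‖z.2.1‖ ^ q < 1 ∧
        ‖z.1‖ ^ (2:ℝ) + ‖z.2.2‖ ^ r < 1}
      {z : ℂ × ℂ × ℂ |
        ‖z.1‖ ^ (2:ℝ) + ‖z.2.1‖ ^ q < 1 ∧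
        ‖z.1‖ ^ (2:ℝ) + ‖z.2.2‖ ^ r < 1} := by
  intro z hz
  obtain ⟨h1, h2⟩ := hz
  have hz1 : ‖z.1‖ < 1 := by
    have hX : 0 ≤ ‖z.2.1‖ ^ q := Real.rpow_nonneg (norm_nonneg _) _
    have h1' := h1
    rw [aux_rpow_two] at h1'
    have hns : Complex.normSq z.1 < 1 := by linarith
    rw [← Complex.sq_norm, sq_lt_one_iff_abs_lt_one] at hns
    exact lt_of_le_of_lt (le_abs_self _) hns
  constructor
  · show ‖_‖ ^ (2:ℝ) + ‖_‖ ^ q < 1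
    rw [aux_rpow_two, aux_abs_coord q hq _ (aux_c_pos a ha).le, aux_norm_normSq]
    refine (aux_mem_iff q hq a z.1 z.2.1 ha hz1).mpr ?_
    rw [aux_rpow_two] at h1; exact h1
  · show ‖_‖ ^ (2:ℝ) + ‖_‖ ^ r < 1
    rw [aux_rpow_two, aux_abs_coord r hr _ (aux_c_pos a ha).le, aux_norm_normSq]
    refine (aux_mem_iff r hr a z.1 z.2.2 ha hz1).mpr ?_
    rw [aux_rpow_two] at h2; exact h2
lemma aux_fst_lt (z₁ : ℂ) (X : ℝ) (hX : 0 ≤ X) (h : ‖z₁‖ ^ (2:ℝ) + X < 1) :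
    ‖z₁‖ < 1 := by
  rw [aux_rpow_two] at h
  have hns : Complex.normSq z₁ < 1 := by linarith
  rw [← Complex.sq_norm, sq_lt_one_iff_abs_lt_one] at hns
  exact lt_of_le_of_lt (le_abs_self _) hns

theorem automorphism_bijOn (q r : ℝ) (hq : 0 < q) (hr : 0 < r) (a : ℂ) (ha : ‖a‖ < 1) :
    Set.BijOn
      (fun z : ℂ × ℂ × ℂ =>
        ((z.1 - a) / (1 - (starRingEnd ℂ) a * z.1),
         (((1 - ‖a‖ ^ 2 : ℝ) ^ (1 / q : ℝ) : ℝ) : ℂ) * z.2.1 /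
           (1 - (starRingEnd ℂ) a * z.1) ^ ((2 / q : ℝ) : ℂ),
         (((1 - ‖a‖ ^ 2 : ℝ) ^ (1 / r : ℝ) : ℝ) : ℂ) * z.2.2 /
           (1 - (starRingEnd ℂ) a * z.1) ^ ((2 / r : ℝ) : ℂ)))
      {z : ℂ × ℂ × ℂ |
        ‖z.1‖ ^ (2:ℝ) + ‖z.2.1‖ ^ q < 1 ∧
        ‖z.1‖ ^ (2:ℝ) + ‖z.2.2‖ ^ r < 1}
      {z : ℂ × ℂ × ℂ |
        ‖z.1‖ ^ (2:ℝ) + ‖z.2.1‖ ^ q < 1 ∧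
        ‖z.1‖ ^ (2:ℝ) + ‖z.2.2‖ ^ r < 1} := by
  have ha' : ‖-a‖ < 1 := by simpa using ha
  refine Set.InvOn.bijOn (f' := fun z : ℂ × ℂ × ℂ =>
      ((z.1 - (-a)) / (1 - (starRingEnd ℂ) (-a) * z.1),
       (((1 - ‖-a‖ ^ 2 : ℝ) ^ (1 / q : ℝ) : ℝ) : ℂ) * z.2.1 /
         (1 - (starRingEnd ℂ) (-a) * z.1) ^ ((2 / q : ℝ) : ℂ),
       (((1 - ‖-a‖ ^ 2 : ℝ) ^ (1 / r : ℝ) : ℝ) : ℂ) * z.2.2 /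
         (1 - (starRingEnd ℂ) (-a) * z.1) ^ ((2 / r : ℝ) : ℂ)))
    ⟨?_, ?_⟩ (aux_mapsTo q r hq hr a ha) (aux_mapsTo q r hq hr (-a) ha')
  · intro z hz
    have hz1 : ‖z.1‖ < 1 :=
      aux_fst_lt z.1 _ (Real.rpow_nonneg (norm_nonneg _) _) hz.1
    have e1 := aux_comp1 a z.1 ha hz1
    have e2 := aux_comp2 q hq a z.1 z.2.1 ha hz1
    have e3 := aux_comp2 r hr a z.1 z.2.2 ha hz1
    simp only [norm_neg]
    exact Prod.ext e1 (Prod.ext e2 e3)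
  · intro z hz
    have hz1 : ‖z.1‖ < 1 :=
      aux_fst_lt z.1 _ (Real.rpow_nonneg (norm_nonneg _) _) hz.1
    have e1 := aux_comp1 (-a) z.1 ha' hz1
    have e2 := aux_comp2 q hq (-a) z.1 z.2.1 ha' hz1
    have e3 := aux_comp2 r hr (-a) z.1 z.2.2 ha' hz1
    simp only [neg_neg, norm_neg] at e1 e2 e3 ⊢
    exact Prod.ext e1 (Prod.ext e2 e3)
end

section
/- For every real r > 0 and every ε ∈ (0,1), the quadratic polynomial f(s) = (r² + 6r + 8) s² + ε(−2r² − 6r + 4) s + ε² r² has both of its complex roots in the open unit disc. -/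
theorem quadratic_roots_in_disc (r ε : ℝ) (hr : 0 < r) (hε0 : 0 < ε) (hε1 : ε < 1) :
    ∀ s : ℂ, ((r : ℂ) ^ 2 + 6 * r + 8) * s ^ 2 +
        (ε : ℂ) * (-2 * r ^ 2 - 6 * r + 4) * s + (ε : ℂ) ^ 2 * r ^ 2 = 0 →
      ‖s‖ < 1 := by
  intro s hs
  set a : ℝ := r ^ 2 + 6 * r + 8 with ha_def
  set b : ℝ := ε * (-2 * r ^ 2 - 6 * r + 4) with hb_def
  set c : ℝ := ε ^ 2 * r ^ 2 with hc_def
  have ha : 0 < a := by positivity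
  have hc : 0 < c := by positivity
  have h1 : 0 < a + b + c := by
    simp only [ha_def, hb_def, hc_def]
    nlinarith [sq_nonneg (r * (1 - ε)), mul_pos hr (sub_pos.mpr hε1)]
  have h2 : 0 < a - b + c := by
    simp only [ha_def, hb_def, hc_def]
    nlinarith [sq_nonneg (r * (1 + ε)), mul_pos hr hε0]
  have hca : c < a := by
    simp only [ha_def, hc_def]
    nlinarith [mul_pos hr hr]
  have heq : (a : ℂ) * s ^ 2 + (b : ℂ) * s + (c : ℂ) = 0 := by
    simp only [ha_def, hb_def, hc_def]
    push_cast
    linear_combination hs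
  by_cases him : s.im = 0
  · -- s is real
    have hx : s = (s.re : ℂ) := by
      apply Complex.ext <;> simp [him]
    set x := s.re with hx_def
    have hre : a * x ^ 2 + b * x + c = 0 := by
      have : ((a * x ^ 2 + b * x + c : ℝ) : ℂ) = 0 := by
        push_cast
        rw [← hx]; exact heq
      exact_mod_cast this
    have hx2 : x ^ 2 < 1 := by
      by_contra hcon
      push_neg at hcon
      have habs : 1 ≤ x ∨ x ≤ -1 := by
        rcases le_or_gt 0 x with h | h
        · left; nlinarith
        · right; nlinarith
      rcases habs with hx1 | hx1
      · have hax : 0 ≤ a * x - c := by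
          nlinarith [mul_nonneg ha.le (by linarith : (0:ℝ) ≤ x - 1)]
        nlinarith [mul_nonneg (by linarith : (0:ℝ) ≤ x - 1) hax,
          mul_nonneg h1.le (by linarith : (0:ℝ) ≤ x - 1)]
      · have hax : 0 ≤ -(a * x) - c := by
          nlinarith [mul_nonneg ha.le (by linarith : (0:ℝ) ≤ -x - 1)]
        nlinarith [mul_nonneg (by linarith : (0:ℝ) ≤ -x - 1) hax,
          mul_nonneg h2.le (by linarith : (0:ℝ) ≤ -x - 1)]
    have : ‖s‖ = |x| := by rw [hx]; simp
    rw [this, abs_lt]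
    constructor <;> nlinarith
  · -- s is non-real; conjugate is also a root
    have hconj : (a : ℂ) * (starRingEnd ℂ s) ^ 2 + (b : ℂ) * (starRingEnd ℂ s) + (c : ℂ) = 0 := by
      have := congrArg (starRingEnd ℂ) heq
      simpa [map_add, map_mul, map_pow, Complex.conj_ofReal] using this
    have hne : s - starRingEnd ℂ s ≠ 0 := by
      intro h
      have hcs : starRingEnd ℂ s = s := by linear_combination -h
      exact him (Complex.conj_eq_iff_im.mp hcs)
    have hsum : (a : ℂ) * (s + starRingEnd ℂ s) + b = 0 := by
      have hd : (s - starRingEnd ℂ s) * ((a : ℂ) * (s + starRingEnd ℂ s) + b) = 0 := by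
        linear_combination heq - hconj
      rcases mul_eq_zero.mp hd with h | h
      · exact absurd h hne
      · exact h
    have hprod : (a : ℂ) * (s * starRingEnd ℂ s) = c := by
      linear_combination s * hsum - heq
    have hns : (a * Complex.normSq s : ℝ) = c := by
      have := hprod
      rw [Complex.mul_conj] at this
      exact_mod_cast this
    have hlt : Complex.normSq s < 1 := by
      nlinarith
    have hn : ‖s‖ ^ 2 < 1 := by
      rw [Complex.sq_norm]
      exact hlt
    nlinarith [norm_nonneg s]
end

section
/- For positive reals q, r define G(x,y) = q²(x−1)²(−2r²y + (r−2)(r−1)y² + (r+3)r + 8y + 2) − qr(x²−1)(y−1)(3r(y−1) − 4(y+1)) + 2r²(x(x+4)+1)(y−1)². Then for q = r, G has a zero (x₀, y₀) with |x₀| < 1 and |y₀| < 1. -/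
set_option maxHeartbeats 1000000 in
theorem G_has_zero_in_bidisc (r : ℝ) (hr : 0 < r) :
    ∃ x y : ℂ, ‖x‖ < 1 ∧ ‖y‖ < 1 ∧
      (r : ℂ) ^ 2 * (x - 1) ^ 2 *
          (-2 * r ^ 2 * y + ((r : ℂ) - 2) * (r - 1) * y ^ 2 + (r + 3) * r + 8 * y + 2) -
        (r : ℂ) * r * (x ^ 2 - 1) * (y - 1) * (3 * r * (y - 1) - 4 * (y + 1)) +
        2 * (r : ℂ) ^ 2 * (x * (x + 4) + 1) * (y - 1) ^ 2 = 0 := by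
  have hB : (0:ℝ) < r ^ 2 + 1 := by positivity
  set S : ℝ := Real.sqrt (84 * r ^ 2 + 192) with hS_def
  have hS0 : 0 ≤ S := Real.sqrt_nonneg _
  have hS2 : S ^ 2 = 84 * r ^ 2 + 192 := Real.sq_sqrt (by positivity)
  have hSgt : 6 * r < S := by nlinarith
  set s : ℝ := (S - 6 * r) / (24 * (r ^ 2 + 1)) with hs_def
  have hs_pos : 0 < s := by
    apply div_pos <;> nlinarith
  have hs24 : s * (24 * (r ^ 2 + 1)) = S - 6 * r := by
    rw [hs_def]; field_simp
  have hs2le : s ^ 2 ≤ 1 / (r ^ 2 + 1) := by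
    have h1 : (S - 6*r)^2 ≤ S^2 := by nlinarith
    rw [hs_def, div_pow, div_le_div_iff₀ (by positivity) hB]
    nlinarith
  set t : ℝ := Real.sqrt (1 / (r ^ 2 + 1) - s ^ 2) with ht_def
  have ht2 : t ^ 2 = 1 / (r ^ 2 + 1) - s ^ 2 := Real.sq_sqrt (by linarith)
  have hst1 : (s ^ 2 + t ^ 2) * (r ^ 2 + 1) = 1 := by
    rw [ht2]; field_simp; ring
  have hΦs : 48 * (r^2+1)^2 *
      (10*s^2 - 2*t^2 + 6*r*s*(s^2+t^2) + (r^2-2)*(s^2+t^2)^2) = 0 := by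
    linear_combination (2*S + (s*(24*(r^2+1)) - (S - 6*r))) * hs24 + hS2
      + 48*((r^2-2)*(2 + ((s^2+t^2)*(r^2+1) - 1)) - 2*(r^2+1) + 6*r*s*(r^2+1)) * hst1
  have hΦ : 10*s^2 - 2*t^2 + 6*r*s*(s^2+t^2) + (r^2-2)*(s^2+t^2)^2 = 0 := by
    have h48 : (48 * (r^2+1)^2 : ℝ) ≠ 0 := by positivity
    exact (mul_eq_zero.mp hΦs).resolve_left h48
  set u : ℂ := (s : ℂ) + (t : ℂ) * Complex.I with hu_def
  set v : ℂ := (s : ℂ) - (t : ℂ) * Complex.I with hv_def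
  have hI : Complex.I ^ 2 = -1 := Complex.I_sq
  have hP : 3*u^2 + 4*u*v + 3*v^2 + 3*(r:ℂ)*u*v*(u+v) + ((r:ℂ)^2 - 2)*u^2*v^2 = 0 := by
    have hC : ((10*s^2 - 2*t^2 + 6*r*s*(s^2+t^2) + (r^2-2)*(s^2+t^2)^2 : ℝ) : ℂ) = 0 := by
      rw [hΦ]; norm_num
    push_cast at hC
    rw [hu_def, hv_def]
    linear_combination hC + ((2:ℂ)*(t:ℂ)^2 - 6*(r:ℂ)*(s:ℂ)*(t:ℂ)^2
      - ((r:ℂ)^2 - 2)*(t:ℂ)^2*(2*(s:ℂ)^2 + (t:ℂ)^2 - (t:ℂ)^2*Complex.I^2)) * hI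
  have hu_ne : (1 : ℂ) + u ≠ 0 := by
    intro h
    rw [Complex.ext_iff] at h
    simp [hu_def] at h
    linarith [h.1]
  have hv_ne : (1 : ℂ) + v ≠ 0 := by
    intro h
    rw [Complex.ext_iff] at h
    simp [hv_def] at h
    linarith [h.1]
  have hnu : ‖(1:ℂ) - u‖ < ‖(1:ℂ) + u‖ := by
    have h2 : ‖(1:ℂ) - u‖^2 < ‖(1:ℂ) + u‖^2 := by
      rw [Complex.sq_norm, Complex.sq_norm]
      simp [Complex.normSq_apply, hu_def]
      nlinarith
    exact lt_of_pow_lt_pow_left₀ 2 (norm_nonneg _) h2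
  have hnv : ‖(1:ℂ) - v‖ < ‖(1:ℂ) + v‖ := by
    have h2 : ‖(1:ℂ) - v‖^2 < ‖(1:ℂ) + v‖^2 := by
      rw [Complex.sq_norm, Complex.sq_norm]
      simp [Complex.normSq_apply, hv_def]
      nlinarith
    exact lt_of_pow_lt_pow_left₀ 2 (norm_nonneg _) h2
  clear_value u v
  clear hΦ hΦs hst1 ht2 hs2le hs24 hs_pos hS2 hSgt hS0 hB
  set X : ℂ := (1 - u) / (1 + u) with hX_def
  set Y : ℂ := (1 - v) / (1 + v) with hY_def
  set X : ℂ := (1 - u) / (1 + u) with hX_def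
  set Y : ℂ := (1 - v) / (1 + v) with hY_def
  have hX : X * (1 + u) = 1 - u := div_mul_cancel₀ _ hu_ne
  have hY : Y * (1 + v) = 1 - v := div_mul_cancel₀ _ hv_ne
  have hnX : ‖X‖ < 1 := by
    rw [hX_def, norm_div, div_lt_one (lt_of_le_of_lt (norm_nonneg ((1:ℂ) - u)) hnu)]
    exact hnu
  have hnY : ‖Y‖ < 1 := by
    rw [hY_def, norm_div, div_lt_one (lt_of_le_of_lt (norm_nonneg ((1:ℂ) - v)) hnv)]
    exact hnv
  clear_value X Y
  have hD : (((1:ℂ)+u)^2*((1:ℂ)+v)^2 : ℂ) ≠ 0 := mul_ne_zero (pow_ne_zero _ hu_ne) (pow_ne_zero _ hv_ne)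
  refine ⟨X, Y, hnX, hnY, ?_⟩
  have key : (((1:ℂ)+u)^2*((1:ℂ)+v)^2) *
      ((r : ℂ) ^ 2 * (X - 1) ^ 2 *
          (-2 * r ^ 2 * Y + ((r : ℂ) - 2) * (r - 1) * Y ^ 2 + (r + 3) * r + 8 * Y + 2) -
        (r : ℂ) * r * (X ^ 2 - 1) * (Y - 1) * (3 * r * (Y - 1) - 4 * (Y + 1)) +
        2 * (r : ℂ) ^ 2 * (X * (X + 4) + 1) * (Y - 1) ^ 2) = 0 := by
    linear_combination (((4)*(r:ℂ)^2 + (-28)*(r:ℂ)^2*Y + (12)*(r:ℂ)^2*Y^2 + (4)*(r:ℂ)^2*X*Y + (8)*(r:ℂ)^2*X*Y^2 + (8)*(r:ℂ)^2*v + (-56)*(r:ℂ)^2*v*Y + (24)*(r:ℂ)^2*v*Y^2 + (8)*(r:ℂ)^2*v*X*Y + (16)*(r:ℂ)^2*v*X*Y^2 + (4)*(r:ℂ)^2*v^2 + (-28)*(r:ℂ)^2*v^2*Y + (12)*(r:ℂ)^2*v^2*Y^2 + (4)*(r:ℂ)^2*v^2*X*Y + (8)*(r:ℂ)^2*v^2*X*Y^2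 + (4)*(r:ℂ)^2*u + (-36)*(r:ℂ)^2*u*Y + (-4)*(r:ℂ)^2*u*Y^2 + (4)*(r:ℂ)^2*u*X*Y + (8)*(r:ℂ)^2*u*X*Y^2 + (8)*(r:ℂ)^2*u*v + (-72)*(r:ℂ)^2*u*v*Y + (-8)*(r:ℂ)^2*u*v*Y^2 + (8)*(r:ℂ)^2*u*v*X*Y + (16)*(r:ℂ)^2*u*v*X*Y^2 + (4)*(r:ℂ)^2*u*v^2 + (-36)*(r:ℂ)^2*u*v^2*Y + (-4)*(r:ℂ)^2*u*v^2*Y^2 + (4)*(r:ℂ)^2*u*v^2*X*Y + (8)*(r:ℂ)^2*u*v^2*X*Y^2 + (-6)*(r:ℂ)^3 + (6)*(r:ℂ)^3*Y + (6)*(r:ℂ)^3*X*Y + (-6)*(r:ℂ)^3*X*Y^2 + (-12)*(r:ℂ)^3*v + (12)*(r:ℂ)^3*v*Y + (12)*(r:ℂ)^3*v*X*Y + (-12)*(r:ℂ)^3*v*X*Y^2 + (-6)*(r:ℂ)^3*v^2 + (6)*(r:ℂ)^3*v^2*Y + (6)*(r:ℂ)^3*v^2*X*Y + (-6)*(r:ℂ)^3*v^2*X*Y^2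 + (-6)*(r:ℂ)^3*u + (-6)*(r:ℂ)^3*u*Y + (12)*(r:ℂ)^3*u*Y^2 + (6)*(r:ℂ)^3*u*X*Y + (-6)*(r:ℂ)^3*u*X*Y^2 + (-12)*(r:ℂ)^3*u*v + (-12)*(r:ℂ)^3*u*v*Y + (24)*(r:ℂ)^3*u*v*Y^2 + (12)*(r:ℂ)^3*u*v*X*Y + (-12)*(r:ℂ)^3*u*v*X*Y^2 + (-6)*(r:ℂ)^3*u*v^2 + (-6)*(r:ℂ)^3*u*v^2*Y + (12)*(r:ℂ)^3*u*v^2*Y^2 + (6)*(r:ℂ)^3*u*v^2*X*Y + (-6)*(r:ℂ)^3*u*v^2*X*Y^2 + (-1)*(r:ℂ)^4 + (2)*(r:ℂ)^4*Y + (-1)*(r:ℂ)^4*Y^2 + (1)*(r:ℂ)^4*X + (-2)*(r:ℂ)^4*X*Y + (1)*(r:ℂ)^4*X*Y^2 + (-2)*(r:ℂ)^4*v + (4)*(r:ℂ)^4*v*Y + (-2)*(r:ℂ)^4*v*Y^2 + (2)*(r:ℂ)^4*v*X + (-4)*(r:ℂ)^4*v*X*Y + (2)*(r:ℂ)^4*v*X*Y^2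 + (-1)*(r:ℂ)^4*v^2 + (2)*(r:ℂ)^4*v^2*Y + (-1)*(r:ℂ)^4*v^2*Y^2 + (1)*(r:ℂ)^4*v^2*X + (-2)*(r:ℂ)^4*v^2*X*Y + (1)*(r:ℂ)^4*v^2*X*Y^2 + (-3)*(r:ℂ)^4*u + (6)*(r:ℂ)^4*u*Y + (-3)*(r:ℂ)^4*u*Y^2 + (1)*(r:ℂ)^4*u*X + (-2)*(r:ℂ)^4*u*X*Y + (1)*(r:ℂ)^4*u*X*Y^2 + (-6)*(r:ℂ)^4*u*v + (12)*(r:ℂ)^4*u*v*Y + (-6)*(r:ℂ)^4*u*v*Y^2 + (2)*(r:ℂ)^4*u*v*X + (-4)*(r:ℂ)^4*u*v*X*Y + (2)*(r:ℂ)^4*u*v*X*Y^2 + (-3)*(r:ℂ)^4*u*v^2 + (6)*(r:ℂ)^4*u*v^2*Y + (-3)*(r:ℂ)^4*u*v^2*Y^2 + (1)*(r:ℂ)^4*u*v^2*X + (-2)*(r:ℂ)^4*u*v^2*X*Y + (1)*(r:ℂ)^4*u*v^2*X*Y^2)) * hX + (((-12)*(r:ℂ)^2 + (12)*(r:ℂ)^2*Y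 + (-36)*(r:ℂ)^2*v + (12)*(r:ℂ)^2*v*Y + (-16)*(r:ℂ)^2*u + (-16)*(r:ℂ)^2*u*Y + (16)*(r:ℂ)^2*u*v + (-16)*(r:ℂ)^2*u*v*Y + (44)*(r:ℂ)^2*u^2 + (4)*(r:ℂ)^2*u^2*Y + (36)*(r:ℂ)^2*u^2*v + (4)*(r:ℂ)^2*u^2*v*Y + (-12)*(r:ℂ)^3*u + (12)*(r:ℂ)^3*u*Y + (-36)*(r:ℂ)^3*u*v + (12)*(r:ℂ)^3*u*v*Y + (-12)*(r:ℂ)^3*u^2 + (-12)*(r:ℂ)^3*u^2*Y + (12)*(r:ℂ)^3*u^2*v + (-12)*(r:ℂ)^3*u^2*v*Y + (-4)*(r:ℂ)^4*u^2 + (4)*(r:ℂ)^4*u^2*Y + (-12)*(r:ℂ)^4*u^2*v + (4)*(r:ℂ)^4*u^2*v*Y)) * hY + (16*(r:ℂ)^2) * hP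
  exact (mul_eq_zero.mp key).resolve_left hD
end
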